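/- Let f : Fin n → Fin k be a function with Young stabilizer S_f, let λ_l = |f⁻¹(l)|, fix two distinct elements a, b ∈ Fin n and two distinct indices i, j ∈ Fin k with λ_i ≥ 1 and λ_j ≥ 1. Then the number of right cosets [g] of S_f in Perm (Fin n) with f(g(a)) = i and f(g(b)) = j equals (n−2)! / ((λ_i − 1)! · (λ_j − 1)! · ∏_{l ∉ {i,j}} (λ_l)!). -/

import Mathlib

open Finset


section
variable {α : Type*} [DecidableEq α]

def pairEquiv (a b x y : α) (hab : a ≠ b) (hxy : x ≠ y) :
    {z // z = a ∨ z = b} ≃ {w // w = x ∨ w = y} where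
  toFun z := if z.1 = a then ⟨x, Or.inl rfl⟩ else ⟨y, Or.inr rfl⟩
  invFun w := if w.1 = x then ⟨a, Or.inl rfl⟩ else ⟨b, Or.inr rfl⟩
  left_inv := by rintro ⟨z, rfl | rfl⟩ <;> simp [hab.symm, hxy.symm, hab, hxy]
  right_inv := by rintro ⟨w, rfl | rfl⟩ <;> simp [hab.symm, hxy.symm, hab, hxy]

def ext2 (a b x y : α) (hab : a ≠ b) (hxy : x ≠ y)
    (e : {z // ¬(z = a ∨ z = b)} ≃ {w // ¬(w = x ∨ w = y)}) : Equiv.Perm α :=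
  (Equiv.sumCompl (fun z => z = a ∨ z = b)).symm.trans
    ((Equiv.sumCongr (pairEquiv a b x y hab hxy) e).trans
      (Equiv.sumCompl (fun w => w = x ∨ w = y)))

lemma ext2_a (a b x y : α) (hab : a ≠ b) (hxy : x ≠ y) (e) :
    ext2 a b x y hab hxy e a = x := by
  have h := Equiv.sumCompl_symm_apply_of_pos (p := fun z => z = a ∨ z = b) (a := a) (Or.inl rfl)
  simp [ext2, h, pairEquiv]

lemma ext2_b (a b x y : α) (hab : a ≠ b) (hxy : x ≠ y) (e) :
    ext2 a b x y hab hxy e b = y := by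
  have h := Equiv.sumCompl_symm_apply_of_pos (p := fun z => z = a ∨ z = b) (a := b) (Or.inr rfl)
  simp [ext2, h, pairEquiv, hab.symm]

lemma ext2_ne (a b x y : α) (hab : a ≠ b) (hxy : x ≠ y) (e) (z : α) (hz : ¬(z = a ∨ z = b)) :
    ext2 a b x y hab hxy e z = e ⟨z, hz⟩ := by
  have h := Equiv.sumCompl_symm_apply_of_neg (p := fun z => z = a ∨ z = b) (a := z) hz
  simp [ext2, h]

def permPairEquiv (a b x y : α) (hab : a ≠ b) (hxy : x ≠ y) :
    {g : Equiv.Perm α // g a = x ∧ g b = y} ≃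
      ({z // ¬(z = a ∨ z = b)} ≃ {w // ¬(w = x ∨ w = y)}) where
  toFun g := Equiv.subtypeEquiv g.1 (fun z => by
    obtain ⟨g, hga, hgb⟩ := g
    constructor
    · intro hz h
      rcases h with h | h
      · exact hz (Or.inl (g.injective (h.trans hga.symm)))
      · exact hz (Or.inr (g.injective (h.trans hgb.symm)))
    · intro hz h
      rcases h with rfl | rfl
      · exact hz (Or.inl hga)
      · exact hz (Or.inr hgb))
  invFun e := ⟨ext2 a b x y hab hxy e, ext2_a a b x y hab hxy e, ext2_b a b x y hab hxy e⟩
  left_inv := by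
    rintro ⟨g, hga, hgb⟩
    apply Subtype.ext
    apply Equiv.ext
    intro z
    by_cases hz : z = a ∨ z = b
    · rcases hz with rfl | rfl
      · rw [ext2_a, hga]
      · rw [ext2_b, hgb]
    · rw [ext2_ne a b x y hab hxy _ z hz]
      rfl
  right_inv := by
    intro e
    apply Equiv.ext
    rintro ⟨z, hz⟩
    apply Subtype.ext
    show ext2 a b x y hab hxy e z = _
    rw [ext2_ne a b x y hab hxy e z hz]

variable [Fintype α]

lemma exists_perm_pair (a b x y : α) (hab : a ≠ b) (hxy : x ≠ y) :
    ∃ g : Equiv.Perm α, g a = x ∧ g b = y := by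
  refine ⟨(Equiv.swap a x).trans (Equiv.swap (Equiv.swap a x b) y), ?_, ?_⟩
  · have h1 : x ≠ Equiv.swap a x b := by
      intro h
      apply hab
      have := (Equiv.swap a x).injective (show Equiv.swap a x a = Equiv.swap a x b by
        rw [Equiv.swap_apply_left, ← h])
      exact this
    simp only [Equiv.trans_apply, Equiv.swap_apply_left]
    exact Equiv.swap_apply_of_ne_of_ne h1 hxy
  · simp [Equiv.swap_apply_left]

lemma card_two_subtype (a b : α) (hab : a ≠ b) :
    Fintype.card {z // z = a ∨ z = b} = 2 := by
  rw [Fintype.card_subtype]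
  have : (univ.filter fun z => z = a ∨ z = b) = {a, b} := by
    ext z; simp [or_comm]
  rw [this, card_insert_of_notMem (by simpa using hab), card_singleton]

lemma card_perm_pair (a b x y : α) (hab : a ≠ b) (hxy : x ≠ y) :
    Fintype.card {g : Equiv.Perm α // g a = x ∧ g b = y} =
      Nat.factorial (Fintype.card α - 2) := by
  rw [Fintype.card_congr (permPairEquiv a b x y hab hxy)]
  obtain ⟨g0, hg0⟩ := exists_perm_pair a b x y hab hxy
  rw [Fintype.card_equiv (permPairEquiv a b x y hab hxy ⟨g0, hg0⟩)]
  congr 1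
  rw [Fintype.card_subtype_compl, card_two_subtype a b hab]
end

lemma card_perm_fiber_pair {n k : ℕ} (f : Fin n → Fin k) (a b : Fin n) (hab : a ≠ b)
    (i j : Fin k) (hij : i ≠ j) :
    Fintype.card {g : Equiv.Perm (Fin n) // f (g a) = i ∧ f (g b) = j} =
      (univ.filter fun x => f x = i).card * (univ.filter fun x => f x = j).card *
        Nat.factorial (n - 2) := by
  classical
  rw [Fintype.card_subtype]
  rw [Finset.card_eq_sum_card_fiberwise
    (f := fun g : Equiv.Perm (Fin n) => (g a, g b))
    (t := (univ.filter fun x => f x = i) ×ˢ (univ.filter fun x => f x = j))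
    (fun g hg => by simp only [Finset.mem_coe, mem_filter, mem_univ, true_and] at hg ⊢
                    simp [Finset.mem_product, hg.1, hg.2])]
  have hfib : ∀ p ∈ (univ.filter fun x => f x = i) ×ˢ (univ.filter fun x => f x = j),
      ((univ.filter fun g : Equiv.Perm (Fin n) => f (g a) = i ∧ f (g b) = j).filter
        (fun g => (g a, g b) = p)).card = Nat.factorial (n - 2) := by
    intro p hp
    simp only [Finset.mem_product, mem_filter, mem_univ, true_and] at hp
    have hpne : p.1 ≠ p.2 := fun h => hij (hp.1 ▸ h ▸ hp.2 ▸ rfl)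
    have : ((univ.filter fun g : Equiv.Perm (Fin n) => f (g a) = i ∧ f (g b) = j).filter
        (fun g => (g a, g b) = p)) = univ.filter fun g => g a = p.1 ∧ g b = p.2 := by
      ext g
      simp only [mem_filter, mem_univ, true_and, Prod.ext_iff]
      constructor
      · rintro ⟨_, h⟩; exact h
      · rintro ⟨h1, h2⟩
        exact ⟨⟨h1 ▸ hp.1, h2 ▸ hp.2⟩, h1, h2⟩
    rw [this, ← Fintype.card_subtype, card_perm_pair a b p.1 p.2 hab hpne,
      Fintype.card_fin]
  rw [Finset.sum_congr rfl hfib, Finset.sum_const, Finset.card_product, smul_eq_mul]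

/-- The Young stabilizer of a function `f : Fin n → Fin k`: the subgroup of permutations
`σ` of `Fin n` with `f ∘ σ = f`. -/
def youngStabilizer (n k : ℕ) (f : Fin n → Fin k) : Subgroup (Equiv.Perm (Fin n)) where
  carrier := {σ : Equiv.Perm (Fin n) | f ∘ ⇑σ = f}
  one_mem' := by
    funext i
    simp
  mul_mem' := by
    intro σ τ hσ hτ
    funext i
    have h1 := congrFun hσ (τ i)
    have h2 := congrFun hτ i
    simp only [Function.comp_apply] at h1 h2 ⊢
    simp [Equiv.Perm.mul_apply, h1, h2]
  inv_mem' := by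
    intro σ hσ
    funext i
    have h1 := congrFun hσ (σ⁻¹ i)
    simp only [Function.comp_apply, Equiv.Perm.inv_def, Equiv.apply_symm_apply] at h1 ⊢
    exact h1.symm

lemma mem_youngStabilizer {n k : ℕ} {f : Fin n → Fin k} {σ : Equiv.Perm (Fin n)} :
    σ ∈ youngStabilizer n k f ↔ f ∘ ⇑σ = f := Iff.rfl

lemma coset_count (n k : ℕ) (f : Fin n → Fin k) (a b : Fin n) (i j : Fin k) :
    Nat.card {c : Quotient (QuotientGroup.rightRel (youngStabilizer n k f)) //
        ∃ g : Equiv.Perm (Fin n),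
          Quotient.mk (QuotientGroup.rightRel (youngStabilizer n k f)) g = c ∧
            f (g a) = i ∧ f (g b) = j} * Nat.card (youngStabilizer n k f) =
      Nat.card {g : Equiv.Perm (Fin n) // f (g a) = i ∧ f (g b) = j} := by
  classical
  set S := youngStabilizer n k f with hS
  set P : Equiv.Perm (Fin n) → Prop := fun g => f (g a) = i ∧ f (g b) = j with hP
  set T := {c : Quotient (QuotientGroup.rightRel S) //
    ∃ g : Equiv.Perm (Fin n), Quotient.mk (QuotientGroup.rightRel S) g = c ∧ P g} with hT
  set proj : {g : Equiv.Perm (Fin n) // P g} → T :=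
    fun g => ⟨Quotient.mk (QuotientGroup.rightRel S) g.1, ⟨g.1, rfl, g.2⟩⟩ with hproj
  have key : ∀ c : T,
      Nat.card {g : {g : Equiv.Perm (Fin n) // P g} // proj g = c} = Nat.card S := by
    intro c
    obtain ⟨g₀, hg₀, hP₀⟩ := c.2
    refine Nat.card_congr ⟨?_, ?_, ?_, ?_⟩
    · rintro ⟨⟨g, hg⟩, hgc⟩
      refine ⟨g * g₀⁻¹, ?_⟩
      have h1 : Quotient.mk (QuotientGroup.rightRel S) g = c.1 := congrArg Subtype.val hgc
      have h2 : Quotient.mk (QuotientGroup.rightRel S) g₀ =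
          Quotient.mk (QuotientGroup.rightRel S) g := hg₀.trans h1.symm
      exact QuotientGroup.rightRel_apply.mp (Quotient.exact h2)
    · rintro ⟨s, hs⟩
      refine ⟨⟨s * g₀, ?_, ?_⟩, ?_⟩
      · have h := congrFun (mem_youngStabilizer.mp hs) (g₀ a)
        simp only [Function.comp_apply] at h
        simpa [Equiv.Perm.mul_apply, h] using hP₀.1
      · have h := congrFun (mem_youngStabilizer.mp hs) (g₀ b)
        simp only [Function.comp_apply] at h
        simpa [Equiv.Perm.mul_apply, h] using hP₀.2
      · apply Subtype.ext
        show Quotient.mk (QuotientGroup.rightRel S) (s * g₀) = c.1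
        rw [← hg₀]
        exact Quot.sound (QuotientGroup.rightRel_apply.mpr (by simpa using hs))
    · rintro ⟨⟨g, hg⟩, hgc⟩
      apply Subtype.ext
      apply Subtype.ext
      simp
    · rintro ⟨s, hs⟩
      apply Subtype.ext
      simp
  have hsig := Nat.card_congr (Equiv.sigmaFiberEquiv proj).symm
  have h2 : Nat.card ((c : T) × {g // proj g = c}) = ∑ c : T, Nat.card {g // proj g = c} := by
    rw [Nat.card_eq_fintype_card, Fintype.card_sigma]
    exact Finset.sum_congr rfl fun c _ => Nat.card_eq_fintype_card.symm
  rw [hsig, h2, Finset.sum_congr rfl (fun c _ => key c), Finset.sum_const, smul_eq_mul,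
    Nat.card_eq_fintype_card, Finset.card_univ]

lemma youngStabilizer_card (n k : ℕ) (f : Fin n → Fin k) :
    Nat.card (youngStabilizer n k f) =
      ∏ l : Fin k, Nat.factorial ((univ.filter fun x => f x = l).card) := by
  classical
  have e : {g : Equiv.Perm (Fin n) // f ∘ ⇑g = f} ≃ youngStabilizer n k f :=
    Equiv.subtypeEquivRight (fun g => mem_youngStabilizer.symm)
  rw [Nat.card_eq_fintype_card, ← Fintype.card_congr e, DomMulAct.stabilizer_card]
  exact Finset.prod_congr rfl fun l _ => by rw [Fintype.card_subtype]

/-- For distinct `a, b` and distinct indices `i ≠ j` with nonempty fibers, the number of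
right cosets `[g]` of the Young stabilizer with `f (g a) = i` and `f (g b) = j` equals
`(n-2)! / ((λ_i - 1)! * (λ_j - 1)! * ∏_{l ∉ {i,j}} (λ_l)!)`. -/
theorem stmt3 (n k : ℕ) (f : Fin n → Fin k) (a b : Fin n) (hab : a ≠ b) (i j : Fin k)
    (hij : i ≠ j)
    (hi : 1 ≤ (Finset.univ.filter fun x => f x = i).card)
    (hj : 1 ≤ (Finset.univ.filter fun x => f x = j).card) :
    Nat.card {c : Quotient (QuotientGroup.rightRel (youngStabilizer n k f)) //
        ∃ g : Equiv.Perm (Fin n),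
          Quotient.mk (QuotientGroup.rightRel (youngStabilizer n k f)) g = c ∧
            f (g a) = i ∧ f (g b) = j} =
      Nat.factorial (n - 2) /
        (Nat.factorial ((Finset.univ.filter fun x => f x = i).card - 1) *
          Nat.factorial ((Finset.univ.filter fun x => f x = j).card - 1) *
          ∏ l ∈ (Finset.univ.erase i).erase j,
            Nat.factorial ((Finset.univ.filter fun x => f x = l).card)) := by
  classical
  set lam : Fin k → ℕ := fun l => (Finset.univ.filter fun x => f x = l).card with hlam
  set R : ℕ := ∏ l ∈ (Finset.univ.erase i).erase j, Nat.factorial (lam l) with hR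
  set C : ℕ := Nat.card {c : Quotient (QuotientGroup.rightRel (youngStabilizer n k f)) //
        ∃ g : Equiv.Perm (Fin n),
          Quotient.mk (QuotientGroup.rightRel (youngStabilizer n k f)) g = c ∧
            f (g a) = i ∧ f (g b) = j} with hC
  have hcc := coset_count n k f a b i j
  have hstab := youngStabilizer_card n k f
  have hcount : Nat.card {g : Equiv.Perm (Fin n) // f (g a) = i ∧ f (g b) = j} =
      lam i * lam j * Nat.factorial (n - 2) := by
    rw [Nat.card_eq_fintype_card]
    exact card_perm_fiber_pair f a b hab i j hij
  -- decompose the product of factorials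
  have e1 : (∏ l : Fin k, Nat.factorial (lam l)) =
      Nat.factorial (lam i) * (Nat.factorial (lam j) * R) := by
    rw [← Finset.mul_prod_erase Finset.univ _ (Finset.mem_univ i),
      ← Finset.mul_prod_erase _ _ (Finset.mem_erase.mpr ⟨hij.symm, Finset.mem_univ j⟩)]
  have hfi : Nat.factorial (lam i) = lam i * Nat.factorial (lam i - 1) :=
    (Nat.mul_factorial_pred (n := lam i) (Nat.one_le_iff_ne_zero.mp hi)).symm
  have hfj : Nat.factorial (lam j) = lam j * Nat.factorial (lam j - 1) :=
    (Nat.mul_factorial_pred (n := lam j) (Nat.one_le_iff_ne_zero.mp hj)).symm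
  have heq : C * (lam i * lam j * (Nat.factorial (lam i - 1) *
      Nat.factorial (lam j - 1) * R)) = lam i * lam j * Nat.factorial (n - 2) := by
    rw [← hcount, ← hcc, hstab, e1, hfi, hfj]
    ring
  have hpos : 0 < lam i * lam j := Nat.mul_pos hi hj
  have hkey : C * (Nat.factorial (lam i - 1) * Nat.factorial (lam j - 1) * R) =
      Nat.factorial (n - 2) := by
    apply Nat.eq_of_mul_eq_mul_left hpos
    rw [← heq]
    ring
  have hPpos : 0 < Nat.factorial (lam i - 1) * Nat.factorial (lam j - 1) * R := by
    apply Nat.mul_pos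
    apply Nat.mul_pos (Nat.factorial_pos _) (Nat.factorial_pos _)
    exact Finset.prod_pos fun l _ => Nat.factorial_pos _
  exact (Nat.div_eq_of_eq_mul_left hPpos hkey.symm).symm
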